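/- Let f : {-1,1}^n → R be of degree at most d, and let I_1,...,I_d be disjoint subsets of [n]. For y ∈ {-1,1}^d and x ∈ {-1,1}^n define y∘x ∈ {-1,1}^n by (y∘x)_i = y_j x_i if i ∈ I_j and (y∘x)_i = x_i otherwise. Then E_{y ~ unif({-1,1}^d)} [ f(y∘x) · y_1···y_d ] = sum over subsets T with |T ∩ I_j| = 1 for all j of \hat{f}(T) x^T. -/
import Mathlib


theorem expectation_sign_twist_formula
    (n d : ℕ) (fhat : Finset (Fin n) → ℝ)
    (hdeg : ∀ T : Finset (Fin n), fhat T ≠ 0 → T.card ≤ d)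
    (I : Fin d → Finset (Fin n))
    (hdisj : ∀ j j' : Fin d, j ≠ j' → Disjoint (I j) (I j'))
    (x : Fin n → ℝ) (hx : ∀ i, x i = 1 ∨ x i = -1) :
    (2 ^ d : ℝ)⁻¹ *
      (∑ s : Fin d → Bool,
        ((∑ T ∈ Finset.univ.powerset, fhat T *
            ∏ i ∈ T,
              ((∏ j ∈ Finset.univ.filter fun j : Fin d => i ∈ I j,
                  (if s j then (1 : ℝ) else -1)) * x i)) *
          ∏ j : Fin d, (if s j then (1 : ℝ) else -1))) =
    ∑ T ∈ Finset.univ.powerset.filter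
        (fun T : Finset (Fin n) => ∀ j : Fin d, (T ∩ I j).card = 1),
      fhat T * ∏ i ∈ T, x i := by
  classical
  simp_rw [Finset.sum_mul]
  rw [Finset.sum_comm]
  rw [Finset.sum_filter, Finset.mul_sum]
  refine Finset.sum_congr rfl ?_
  intro T _
  have key : ∀ s : Fin d → Bool,
      fhat T * (∏ i ∈ T, ((∏ j ∈ Finset.univ.filter fun j : Fin d => i ∈ I j,
          (if s j then (1:ℝ) else -1)) * x i)) *
        ∏ j : Fin d, (if s j then (1:ℝ) else -1)
      = fhat T * (∏ i ∈ T, x i) *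
        ∏ j : Fin d, (if s j then (1:ℝ) else -1) ^ ((T ∩ I j).card + 1) := by
    intro s
    rw [Finset.prod_mul_distrib]
    have h1 : (∏ i ∈ T, ∏ j ∈ Finset.univ.filter fun j : Fin d => i ∈ I j,
        (if s j then (1:ℝ) else -1))
        = ∏ j : Fin d, (if s j then (1:ℝ) else -1) ^ (T ∩ I j).card := by
      rw [Finset.prod_comm' (t' := Finset.univ) (s' := fun j => T ∩ I j)
        (by intro i j; simp [Finset.mem_inter, and_comm])]
      exact Finset.prod_congr rfl fun j _ => Finset.prod_const _
    have h2 : (∏ j : Fin d, (if s j then (1:ℝ) else -1) ^ (T ∩ I j).card) *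
        (∏ j : Fin d, (if s j then (1:ℝ) else -1))
        = ∏ j : Fin d, (if s j then (1:ℝ) else -1) ^ ((T ∩ I j).card + 1) := by
      rw [← Finset.prod_mul_distrib]
      exact Finset.prod_congr rfl fun j _ => (pow_succ _ _).symm
    rw [h1, ← h2]; ring
  rw [Finset.sum_congr rfl fun s _ => key s, ← Finset.mul_sum]
  have hsum : (∑ s : Fin d → Bool,
      ∏ j : Fin d, (if s j then (1:ℝ) else -1) ^ ((T ∩ I j).card + 1))
      = ∏ j : Fin d, ((1:ℝ) + (-1) ^ ((T ∩ I j).card + 1)) := by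
    rw [Finset.prod_congr rfl fun j (_ : j ∈ Finset.univ) =>
      (by norm_num :
        ((1:ℝ) + (-1) ^ ((T ∩ I j).card + 1))
          = ∑ b : Bool, (if b then (1:ℝ) else -1) ^ ((T ∩ I j).card + 1))]
    rw [Finset.prod_univ_sum]
    rw [← Fintype.piFinset_univ]
  rw [hsum]
  by_cases hf0 : fhat T = 0
  · simp [hf0]
  by_cases hc : ∀ j : Fin d, (T ∩ I j).card = 1
  · have h2' : ∀ j : Fin d, ((1:ℝ) + (-1) ^ ((T ∩ I j).card + 1)) = 2 := fun j => by
      rw [hc j]; norm_num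
    have hprod : (∏ j : Fin d, ((1:ℝ) + (-1) ^ ((T ∩ I j).card + 1))) = 2 ^ d := by
      rw [Finset.prod_congr rfl fun j _ => h2' j, Finset.prod_const]
      simp
    rw [hprod, if_pos hc]
    have h2d : (2:ℝ) ^ d ≠ 0 := by positivity
    field_simp
  · rw [if_neg hc]
    have hcard : T.card ≤ d := hdeg T hf0
    have hsum' : ∑ j : Fin d, (T ∩ I j).card ≤ T.card := by
      rw [← Finset.card_biUnion (fun j _ j' _ hjj' =>
        (hdisj j j' hjj').mono Finset.inter_subset_right Finset.inter_subset_right)]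
      exact Finset.card_le_card (Finset.biUnion_subset.mpr fun j _ =>
        Finset.inter_subset_left)
    have heven : ∃ j : Fin d, Even ((T ∩ I j).card) := by
      by_contra h
      push_neg at h
      have hodd : ∀ j : Fin d, Odd ((T ∩ I j).card) := fun j =>
        Nat.not_even_iff_odd.mp (h j)
      obtain ⟨j0, hj0⟩ := not_forall.mp hc
      have hge3 : 3 ≤ (T ∩ I j0).card := by
        rcases hodd j0 with ⟨k, hk⟩
        omega
      have hge1 : ∀ j : Fin d, 1 ≤ (T ∩ I j).card := fun j => (hodd j).pos
      have hb : (Finset.univ.erase j0).card ≤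
          ∑ j ∈ Finset.univ.erase j0, (T ∩ I j).card := by
        simpa using Finset.card_nsmul_le_sum (Finset.univ.erase j0)
          (fun j => (T ∩ I j).card) 1 (fun j _ => hge1 j)
      have hce : (Finset.univ.erase j0).card = d - 1 := by
        simp [Finset.card_erase_of_mem]
      have hsplit : ∑ j ∈ Finset.univ.erase j0, (T ∩ I j).card + (T ∩ I j0).card
          = ∑ j : Fin d, (T ∩ I j).card :=
        Finset.sum_erase_add _ _ (Finset.mem_univ j0)
      have hd : 0 < d := j0.pos
      omega
    obtain ⟨j1, hj1⟩ := heven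
    have : ((1:ℝ) + (-1) ^ ((T ∩ I j1).card + 1)) = 0 := by
      rw [Odd.neg_one_pow (hj1.add_one)]; ring
    rw [Finset.prod_eq_zero (Finset.mem_univ j1) this]
    ring
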